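/- For all integers n, the q-Fibonacci polynomials satisfy the alternative recurrence f(n, x, s) = x·f(n−1, x, q·s) + q·s·f(n−2, x, q^2·s). -/

import Mathlib

open Finset

variable {K : Type*} [Field K]

noncomputable def qFibPos (q x t : K) : ℕ → K
  | 0 => 0
  | 1 => 1
  | n + 2 => x * qFibPos q x t (n + 1) + q ^ n * t * qFibPos q x t n

noncomputable def qFibNeg (q x t : K) : ℕ → K
  | 0 => 0
  | 1 => q / t
  | m + 2 => (qFibNeg q x t m - x * qFibNeg q x t (m + 1)) * q ^ (m + 2) / t

/-- The Carlitz q-Fibonacci polynomial `f(n, x, t)` for `n : ℤ`, defined by `f 0 = 0`,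
`f 1 = 1` and `f n = x * f (n-1) + q^(n-2) * t * f (n-2)`, solved backwards for `n < 0`. -/
noncomputable def qFib (q x t : K) : ℤ → K
  | Int.ofNat n => qFibPos q x t n
  | Int.negSucc m => qFibNeg q x t (m + 1)

lemma qFib_rec (q x t : K) (hq : q ≠ 0) (ht : t ≠ 0) (n : ℤ) :
    qFib q x t n = x * qFib q x t (n - 1) + q ^ (n - 2) * t * qFib q x t (n - 2) := by
  match n with
  | Int.ofNat 0 =>
    show qFib q x t 0 = x * qFib q x t (0 - 1) + q ^ ((0:ℤ) - 2) * t * qFib q x t (0 - 2)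
    have e1 : (0:ℤ) - 1 = Int.negSucc 0 := rfl
    have e2 : (0:ℤ) - 2 = Int.negSucc 1 := rfl
    rw [e1, e2]
    show qFib q x t 0 = x * qFibNeg q x t 1 + q ^ ((0:ℤ) - 2) * t * qFibNeg q x t 2
    have h2 : qFibNeg q x t 2 = (qFibNeg q x t 0 - x * qFibNeg q x t 1) * q ^ 2 / t := rfl
    rw [h2]
    show (0:K) = x * (q/t) + q ^ ((0:ℤ) - 2) * t * ((0 - x * (q/t)) * q ^ 2 / t)
    have : ((0:ℤ) - 2) = -2 := by norm_num
    rw [this, zpow_neg, show ((2:ℤ) = ((2:ℕ):ℤ)) by norm_num, zpow_natCast]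
    field_simp
    ring
  | Int.ofNat 1 =>
    show qFib q x t 1 = x * qFib q x t (1 - 1) + q ^ ((1:ℤ) - 2) * t * qFib q x t (1 - 2)
    have e1 : (1:ℤ) - 1 = Int.ofNat 0 := rfl
    have e2 : (1:ℤ) - 2 = Int.negSucc 0 := rfl
    rw [e1, e2]
    show (1:K) = x * 0 + q ^ ((1:ℤ) - 2) * t * (q / t)
    have : ((1:ℤ) - 2) = -1 := by norm_num
    rw [this, zpow_neg, zpow_one]
    field_simp
    ring
  | Int.ofNat (m+2) =>
    have e1 : (Int.ofNat (m+2):ℤ) - 1 = Int.ofNat (m+1) := by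
      simp [Int.ofNat_eq_coe]; ring
    have e2 : (Int.ofNat (m+2):ℤ) - 2 = Int.ofNat m := by
      simp [Int.ofNat_eq_coe]
    rw [e1, e2]
    show qFibPos q x t (m+2) = x * qFibPos q x t (m+1) + q ^ (Int.ofNat m) * t * qFibPos q x t m
    rw [show (Int.ofNat m) = ((m:ℕ):ℤ) from rfl, zpow_natCast, qFibPos]
  | Int.negSucc m =>
    have e1 : Int.negSucc m - 1 = Int.negSucc (m+1) := rfl
    have e2 : Int.negSucc m - 2 = Int.negSucc (m+2) := rfl
    rw [e1, e2]
    show qFibNeg q x t (m+1) = x * qFibNeg q x t (m+2) + q ^ (Int.negSucc m - 2) * t * qFibNeg q x t (m+3)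
    have h3 : qFibNeg q x t (m+3) = (qFibNeg q x t (m+1) - x * qFibNeg q x t (m+2)) * q ^ (m+3) / t := rfl
    rw [h3]
    have he : (Int.negSucc m : ℤ) - 2 = -((m:ℤ)+3) := by
      simp [Int.negSucc_eq]; ring
    rw [he, zpow_neg]
    have hc : (q:K) ^ ((m:ℤ)+3) = q ^ (m+3) := by
      rw [show ((m:ℤ)+3) = ((m+3:ℕ):ℤ) by push_cast; ring, zpow_natCast]
    rw [hc]
    have hqp : (q:K) ^ (m+3) ≠ 0 := pow_ne_zero _ hq
    field_simp
    ring

lemma R_rec (q x s : K) (hq : q ≠ 0) (hs : s ≠ 0) (n : ℤ) :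
    x * qFib q x (q*s) (n-1) + q*s * qFib q x (q^2*s) (n-2) =
    x * (x * qFib q x (q*s) (n-1-1) + q*s * qFib q x (q^2*s) (n-1-2))
      + q ^ (n-2) * s * (x * qFib q x (q*s) (n-2-1) + q*s * qFib q x (q^2*s) (n-2-2)) := by
  rw [qFib_rec q x (q*s) hq (mul_ne_zero hq hs) (n-1),
      qFib_rec q x (q^2*s) hq (mul_ne_zero (pow_ne_zero 2 hq) hs) (n-2)]
  have h1 : q ^ (n-1-2) = q ^ (n-2) * q⁻¹ := by
    rw [show n-1-2 = n-2-1 by ring, zpow_sub_one₀ hq]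
  have h2 : q ^ (n-2-2) = q ^ (n-2) * q⁻¹ * q⁻¹ := by
    rw [show n-2-2 = n-2-1-1 by ring, zpow_sub_one₀ hq, zpow_sub_one₀ hq]
  rw [h1, h2]
  field_simp
  ring

def AltP (q x s : K) (n : ℤ) : Prop :=
  qFib q x s n = x * qFib q x (q * s) (n - 1) + q * s * qFib q x (q ^ 2 * s) (n - 2)

lemma altP_zero (q x s : K) (hq : q ≠ 0) (hs : s ≠ 0) : AltP q x s 0 := by
  unfold AltP
  rw [show (0-1:ℤ) = Int.negSucc 0 from rfl, show (0-2:ℤ) = Int.negSucc 1 from rfl]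
  show (0:K) = x * (q/(q*s)) +
    q*s*((qFibNeg q x (q^2*s) 0 - x * qFibNeg q x (q^2*s) 1) * q^2/(q^2*s))
  show (0:K) = x * (q/(q*s)) + q*s*((0 - x * (q/(q^2*s))) * q^2/(q^2*s))
  field_simp
  ring

lemma altP_one (q x s : K) (hq : q ≠ 0) (hs : s ≠ 0) : AltP q x s 1 := by
  unfold AltP
  rw [show (1-1:ℤ) = Int.ofNat 0 from rfl, show (1-2:ℤ) = Int.negSucc 0 from rfl]
  show (1:K) = x * 0 + q*s*(q/(q^2*s))
  field_simp
  ring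

lemma altP_up (q x s : K) (hq : q ≠ 0) (hs : s ≠ 0) (m : ℤ)
    (h1 : AltP q x s m) (h2 : AltP q x s (m+1)) : AltP q x s (m+2) := by
  unfold AltP at *
  have hr := qFib_rec q x s hq hs (m+2)
  have hR := R_rec q x s hq hs (m+2)
  simp only [show (m+2-1:ℤ) = m+1 from by ring, show (m+2-2:ℤ) = m from by ring,
    show (m+1-1:ℤ) = m from by ring, show (m+1-2:ℤ) = m-1 from by ring] at hr hR h1 h2 ⊢
  linear_combination hr + x * h2 + (q ^ m * s) * h1 - hR

lemma altP_down (q x s : K) (hq : q ≠ 0) (hs : s ≠ 0) (m : ℤ)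
    (h1 : AltP q x s (m+1)) (h2 : AltP q x s (m+2)) : AltP q x s m := by
  unfold AltP at *
  have hr := qFib_rec q x s hq hs (m+2)
  have hR := R_rec q x s hq hs (m+2)
  simp only [show (m+2-1:ℤ) = m+1 from by ring, show (m+2-2:ℤ) = m from by ring,
    show (m+1-1:ℤ) = m from by ring, show (m+1-2:ℤ) = m-1 from by ring] at hr hR h1 h2 ⊢
  have key : q ^ m * s * qFib q x s m =
      q ^ m * s * (x * qFib q x (q*s) (m-1) + q*s * qFib q x (q^2*s) (m-2)) := by
    linear_combination h2 - hr + hR - x * h1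
  exact mul_left_cancel₀ (mul_ne_zero (zpow_ne_zero _ hq) hs) key

lemma altP_all (q x s : K) (hq : q ≠ 0) (hs : s ≠ 0) (n : ℤ) :
    AltP q x s n ∧ AltP q x s (n+1) := by
  induction n using Int.induction_on with
  | zero =>
    refine ⟨altP_zero q x s hq hs, ?_⟩
    rw [show ((0:ℤ)+1) = 1 by ring]
    exact altP_one q x s hq hs
  | succ i ih =>
    refine ⟨ih.2, ?_⟩
    rw [show ((i:ℤ)+1+1) = i+2 by ring]
    exact altP_up q x s hq hs i ih.1 ih.2
  | pred i ih =>
    constructor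
    · exact altP_down q x s hq hs (-(i:ℤ)-1)
        (by rw [show (-(i:ℤ)-1+1) = -i by ring]; exact ih.1)
        (by rw [show (-(i:ℤ)-1+2) = -i+1 by ring]; exact ih.2)
    · rw [show (-(i:ℤ)-1+1) = -i by ring]
      exact ih.1

theorem qFib_alt_recurrence (q x s : K) (hq : q ≠ 0) (hs : s ≠ 0) (n : ℤ) :
    qFib q x s n = x * qFib q x (q * s) (n - 1) + q * s * qFib q x (q ^ 2 * s) (n - 2) := by
  exact (altP_all q x s hq hs n).1
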